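/- Let α > -1 real and -1 < β ≤ 0, β ∈ 𝒥_α (so that H_{α,β}(t) > 0 on [0,1)). Then the metric density ϱ²_{α,β}(z) = ∂²/∂z∂z̄ [log K_{α,β}(z,z)] satisfies, for α ∈ ℕ, the two-sided bound (α+2)/(1-|z|²)² ≤ ϱ²_{α,β}(z) ≤ ((α+β+2)/(1+β))·1/(1-|z|²)² for all z in the unit disk. -/

import Mathlib

/-- Wirtinger derivative `∂f/∂z = (∂f/∂x - i ∂f/∂y)/2` of `f : ℂ → ℂ` (as a real
Fréchet derivative applied to the directions `1` and `i`). -/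
noncomputable def wderiv (f : ℂ → ℂ) (z : ℂ) : ℂ :=
  (fderiv ℝ f z 1 - Complex.I * fderiv ℝ f z Complex.I) / 2

/-- Conjugate Wirtinger derivative `∂f/∂z̄ = (∂f/∂x + i ∂f/∂y)/2`. -/
noncomputable def wderivBar (f : ℂ → ℂ) (z : ℂ) : ℂ :=
  (fderiv ℝ f z 1 + Complex.I * fderiv ℝ f z Complex.I) / 2

/-- For `α ∈ ℕ`, the finite sum `H_{α,β}(t) = β ∑_{n=0}^{α+1} (-t)^n/(n+β) C(α+1,n)`. -/
noncomputable def Hfin (α : ℕ) (β t : ℝ) : ℝ :=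
  β * ∑ n ∈ Finset.range (α + 2), (-t) ^ n / (n + β) * (Nat.choose (α + 1) n)

/-- `κ_{α,β}(z) = log K_{α,β}(z,z) = log Q_{α,β}(|z|²) - (α+2) log(1-|z|²)`, where for
`α ∈ ℕ`, `β ∈ (-1,0]`, `Q_{α,β} = H_{α,β}`. -/
noncomputable def kappaFn (α : ℕ) (β : ℝ) (z : ℂ) : ℂ :=
  ((Real.log (Hfin α β (Complex.normSq z))
      - ((α : ℝ) + 2) * Real.log (1 - Complex.normSq z) : ℝ) : ℂ)

open Set Filter Real

noncomputable def Hd (α : ℕ) (β t : ℝ) : ℝ :=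
  β * ∑ n ∈ Finset.range (α + 2), (-(n:ℝ) * (-t) ^ (n-1)) / (n + β) * (Nat.choose (α + 1) n)

noncomputable def Hdd (α : ℕ) (β t : ℝ) : ℝ :=
  β * ∑ n ∈ Finset.range (α + 2), ((n:ℝ) * ((n:ℝ)-1) * (-t) ^ (n-2)) / (n + β) * (Nat.choose (α + 1) n)

lemma hasDerivAt_negpow (n : ℕ) (t : ℝ) :
    HasDerivAt (fun t : ℝ => (-t) ^ n) (-(n:ℝ) * (-t) ^ (n-1)) t := by
  have h := (hasDerivAt_pow n (-t)).comp t (hasDerivAt_neg t)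
  refine h.congr_deriv ?_
  ring

lemma hasDerivAt_Hfin (α : ℕ) (β : ℝ) (t : ℝ) :
    HasDerivAt (fun t => Hfin α β t) (Hd α β t) t := by
  unfold Hfin Hd
  apply HasDerivAt.const_mul
  apply HasDerivAt.fun_sum
  intro n _
  exact ((hasDerivAt_negpow n t).div_const ((n:ℝ) + β)).mul_const ((Nat.choose (α+1) n : ℝ))

lemma hasDerivAt_Hd (α : ℕ) (β : ℝ) (t : ℝ) :
    HasDerivAt (fun t => Hd α β t) (Hdd α β t) t := by
  unfold Hd Hdd
  apply HasDerivAt.const_mul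
  apply HasDerivAt.fun_sum
  intro n _
  apply HasDerivAt.mul_const
  apply HasDerivAt.div_const
  match n with
  | 0 => simpa using (hasDerivAt_const t (0:ℝ))
  | 1 => simpa using (hasDerivAt_const t (-1:ℝ))
  | (m+2) =>
    have h := ((hasDerivAt_negpow (m+1) t).const_mul (-((m:ℝ)+2)))
    convert h using 1
    · funext y; push_cast; ring
    · push_cast; ring

lemma one_sub_pow (t : ℝ) (k : ℕ) :
    (1 - t) ^ k = ∑ n ∈ Finset.range (k+1), (-t) ^ n * (Nat.choose k n) := by
  have h := add_pow (-t) 1 k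
  have h2 : (1:ℝ) - t = -t + 1 := by ring
  rw [h2]
  simpa using h

lemma I1 (α : ℕ) (β : ℝ) (hb : -1 < β) (hb0 : β ≠ 0) (t : ℝ) :
    t * Hd α β t = β * ((1 - t) ^ (α + 1) - Hfin α β t) := by
  have hr : α + 1 + 1 = α + 2 := rfl
  simp only [Hfin, Hd, one_sub_pow t (α+1), hr, Finset.mul_sum, mul_sub,
    ← Finset.sum_sub_distrib]
  apply Finset.sum_congr rfl
  intro n _
  match n with
  | 0 => simp [hb0]
  | (m+1) =>
    have hm : (0:ℝ) ≤ (m:ℝ) := Nat.cast_nonneg m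
    have hne : ((m:ℝ)+1) + β ≠ 0 := by nlinarith
    push_cast
    push_cast at hne
    field_simp
    ring

lemma hasDerivAt_one_sub_pow (k : ℕ) (t : ℝ) :
    HasDerivAt (fun t : ℝ => (1 - t) ^ k) (-(k:ℝ) * (1 - t) ^ (k-1)) t := by
  have h := (hasDerivAt_pow k (1-t)).comp t ((hasDerivAt_id t).const_sub 1)
  refine h.congr_deriv ?_
  ring

lemma I2 (α : ℕ) (β : ℝ) (hb : -1 < β) (hb0 : β ≠ 0) (t : ℝ) :
    Hd α β t + t * Hdd α β t = -β * ((α:ℝ)+1) * (1 - t) ^ α - β * Hd α β t := by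
  have h1 : HasDerivAt (fun t => t * Hd α β t) (Hd α β t + t * Hdd α β t) t := by
    simpa using (hasDerivAt_id t).fun_mul (hasDerivAt_Hd α β t)
  have h2 : HasDerivAt (fun t => β * ((1 - t) ^ (α + 1) - Hfin α β t))
      (-β * ((α:ℝ)+1) * (1 - t) ^ α - β * Hd α β t) t := by
    have := ((hasDerivAt_one_sub_pow (α+1) t).sub (hasDerivAt_Hfin α β t)).const_mul β
    refine this.congr_deriv ?_
    push_cast
    ring
  have hfe : (fun t => t * Hd α β t) = (fun t => β * ((1 - t) ^ (α + 1) - Hfin α β t)) :=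
    funext fun s => I1 α β hb hb0 s
  rw [hfe] at h1
  exact h1.unique h2

/-- `D = H - (1-t)^{α+2}` -/
noncomputable def Dfn (α : ℕ) (β t : ℝ) : ℝ := Hfin α β t - (1 - t) ^ (α + 2)
noncomputable def Dd (α : ℕ) (β t : ℝ) : ℝ := Hd α β t + ((α:ℝ) + 2) * (1 - t) ^ (α + 1)
noncomputable def Psi (α : ℕ) (β t : ℝ) : ℝ :=
  ((α:ℝ) + β + 2) * t * Hfin α β t - (1 + β) * Dfn α β t
noncomputable def Psid (α : ℕ) (β t : ℝ) : ℝ :=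
  ((α:ℝ) + β + 2) * (Hfin α β t + t * Hd α β t) - (1 + β) * Dd α β t

lemma hasDerivAt_D (α : ℕ) (β : ℝ) (t : ℝ) :
    HasDerivAt (fun t => Dfn α β t) (Dd α β t) t := by
  unfold Dfn Dd
  have h := (hasDerivAt_Hfin α β t).sub (hasDerivAt_one_sub_pow (α+2) t)
  refine h.congr_deriv ?_
  push_cast
  ring

lemma hasDerivAt_Psi (α : ℕ) (β : ℝ) (t : ℝ) :
    HasDerivAt (fun t => Psi α β t) (Psid α β t) t := by
  unfold Psi Psid
  have h1 : HasDerivAt (fun t : ℝ => t * Hfin α β t) (Hfin α β t + t * Hd α β t) t := by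
    simpa using (hasDerivAt_id t).fun_mul (hasDerivAt_Hfin α β t)
  have h := ((h1.const_mul ((α:ℝ)+β+2)).sub ((hasDerivAt_D α β t).const_mul (1+β)))
  refine h.congr_of_eventuallyEq (Filter.Eventually.of_forall fun s => ?_)
  simp only [Pi.sub_apply]; ring

lemma L7 (α : ℕ) (β : ℝ) (hb : -1 < β) (hb0 : β ≠ 0) (t : ℝ) :
    β * Dfn α β t + t * Dd α β t = ((α:ℝ) + β + 2) * t * (1 - t) ^ (α + 1) := by
  have hp : (1 - t) ^ (α + 2) = (1 - t) ^ (α + 1) * (1 - t) := pow_succ _ _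
  unfold Dfn Dd
  rw [hp]
  linear_combination I1 α β hb hb0 t

lemma L9 (α : ℕ) (β : ℝ) (hb : -1 < β) (hb0 : β ≠ 0) (t : ℝ) :
    (β * Psi α β t + t * Psid α β t) * (1 - t) + t * Psi α β t
      = ((α:ℝ) + 1) * t * Dfn α β t := by
  have hp : (1 - t) ^ (α + 2) = (1 - t) ^ (α + 1) * (1 - t) := pow_succ _ _
  unfold Psi Psid Dfn Dd
  rw [hp]
  linear_combination ((1-t) * (((α:ℝ)+β+2)*t - (1+β))) * I1 α β hb hb0 t

lemma nonneg_of_deriv (φ φ' : ℝ → ℝ)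
    (hderiv : ∀ t ∈ Set.Ioo (0:ℝ) 1, HasDerivAt φ (φ' t) t)
    (hpos : ∀ t ∈ Set.Ioo (0:ℝ) 1, 0 ≤ φ' t)
    (hlim : Filter.Tendsto φ (nhdsWithin 0 (Set.Ioi 0)) (nhds 0)) :
    ∀ t ∈ Set.Ioo (0:ℝ) 1, 0 ≤ φ t := by
  have hconv : Convex ℝ (Set.Ioo (0:ℝ) 1) := convex_Ioo 0 1
  have hcont : ContinuousOn φ (Set.Ioo (0:ℝ) 1) :=
    fun t ht => (hderiv t ht).continuousAt.continuousWithinAt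
  have hdiff : DifferentiableOn ℝ φ (interior (Set.Ioo (0:ℝ) 1)) := by
    rw [interior_Ioo]
    exact fun t ht => (hderiv t ht).differentiableAt.differentiableWithinAt
  have hd0 : ∀ x ∈ interior (Set.Ioo (0:ℝ) 1), 0 ≤ deriv φ x := by
    rw [interior_Ioo]
    intro x hx
    rw [(hderiv x hx).deriv]
    exact hpos x hx
  have hmono : MonotoneOn φ (Set.Ioo (0:ℝ) 1) :=
    monotoneOn_of_deriv_nonneg hconv hcont hdiff hd0
  intro t ht
  have hev : ∀ᶠ s in nhdsWithin 0 (Set.Ioi 0), φ s ≤ φ t := by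
    filter_upwards [Ioo_mem_nhdsGT_of_mem (Set.left_mem_Ico.2 ht.1)] with s hs
    exact hmono ⟨hs.1, hs.2.trans ht.2⟩ ht (le_of_lt hs.2)
  exact le_of_tendsto hlim hev

lemma tendsto_rpow_mul_slope (β : ℝ) (hb : -1 < β) (G : ℝ → ℝ) (G' : ℝ)
    (hG : HasDerivAt G G' 0) (h0 : G 0 = 0) :
    Filter.Tendsto (fun s => s ^ β * G s) (nhdsWithin 0 (Set.Ioi 0)) (nhds 0) := by
  have hslope := hasDerivAt_iff_tendsto_slope.1 hG
  have hs1 : Filter.Tendsto (fun s => G s / s) (nhdsWithin 0 (Set.Ioi 0)) (nhds G') := by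
    have h1 : Filter.Tendsto (slope G 0) (nhdsWithin 0 (Set.Ioi 0)) (nhds G') :=
      hslope.mono_left (nhdsWithin_mono 0 (fun s hs => ne_of_gt hs))
    refine h1.congr (fun s => ?_)
    simp [slope_def_field, h0]
  have hs2 : Filter.Tendsto (fun s : ℝ => s ^ (β+1)) (nhdsWithin 0 (Set.Ioi 0)) (nhds 0) := by
    have hc : ContinuousAt (fun s : ℝ => s ^ (β+1)) 0 :=
      Real.continuousAt_rpow_const 0 (β+1) (Or.inr (by linarith))
    have := hc.tendsto.mono_left (nhdsWithin_le_nhds (s := Set.Ioi 0))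
    simpa [Real.zero_rpow (ne_of_gt (by linarith : (0:ℝ) < β + 1))] using this
  have hmul := hs2.mul hs1
  rw [zero_mul] at hmul
  refine hmul.congr' ?_
  filter_upwards [self_mem_nhdsWithin] with s hs
  have hs0 : (0:ℝ) < s := hs
  rw [Real.rpow_add hs0, Real.rpow_one]
  field_simp

lemma Hfin_zero (α : ℕ) (β : ℝ) (hb0 : β ≠ 0) : Hfin α β 0 = 1 := by
  unfold Hfin
  rw [Finset.sum_eq_single 0]
  · simp [hb0]
  · intro n _ hn
    simp [zero_pow hn]
  · intro h; simp at h

lemma Dfn_zero (α : ℕ) (β : ℝ) (hb0 : β ≠ 0) : Dfn α β 0 = 0 := by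
  simp [Dfn, Hfin_zero α β hb0]

lemma Psi_zero (α : ℕ) (β : ℝ) (hb0 : β ≠ 0) : Psi α β 0 = 0 := by
  simp [Psi, Dfn_zero α β hb0]

/-- P1 : `D ≥ 0` on `[0,1)`. -/
lemma D_nonneg (α : ℕ) (β : ℝ) (hb : -1 < β) (hb0 : β < 0) :
    ∀ t ∈ Set.Ico (0:ℝ) 1, 0 ≤ Dfn α β t := by
  have hb0' : β ≠ 0 := ne_of_lt hb0
  have key : ∀ t ∈ Set.Ioo (0:ℝ) 1, 0 ≤ t ^ β * Dfn α β t := by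
    apply nonneg_of_deriv _ (fun t => ((α:ℝ) + β + 2) * t ^ β * (1 - t) ^ (α + 1))
    · intro t ht
      have ht0 : t ≠ 0 := ne_of_gt ht.1
      have h := (Real.hasDerivAt_rpow_const (x := t) (p := β) (Or.inl ht0)).mul
        (hasDerivAt_D α β t)
      refine h.congr_deriv ?_
      have htb : t ^ β = t ^ (β - 1) * t := by
        rw [← Real.rpow_add_one ht0 (β-1)]; ring_nf
      have hL7 := L7 α β hb hb0' t
      rw [htb]
      linear_combination (t ^ (β-1)) * hL7
    · intro t ht
      have h1 : (0:ℝ) ≤ t ^ β := le_of_lt (Real.rpow_pos_of_pos ht.1 β)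
      have h2 : (0:ℝ) ≤ (1-t) ^ (α+1) := le_of_lt (pow_pos (by linarith [ht.2]) _)
      have h3 : (0:ℝ) ≤ (α:ℝ) := Nat.cast_nonneg α
      have h4 : (0:ℝ) < (α:ℝ) + β + 2 := by linarith
      exact mul_nonneg (mul_nonneg (le_of_lt h4) h1) h2
    · exact tendsto_rpow_mul_slope β hb _ _ (hasDerivAt_D α β 0) (Dfn_zero α β hb0')
  intro t ht
  rcases eq_or_lt_of_le ht.1 with h | h
  · rw [← h, Dfn_zero α β hb0']
  · have h1 := key t ⟨h, ht.2⟩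
    have h2 : (0:ℝ) < t ^ β := Real.rpow_pos_of_pos h β
    nlinarith

/-- P2 : `Psi ≥ 0` on `[0,1)`. -/
lemma Psi_nonneg (α : ℕ) (β : ℝ) (hb : -1 < β) (hb0 : β < 0) :
    ∀ t ∈ Set.Ico (0:ℝ) 1, 0 ≤ Psi α β t := by
  have hb0' : β ≠ 0 := ne_of_lt hb0
  have key : ∀ t ∈ Set.Ioo (0:ℝ) 1, 0 ≤ t ^ β * (Psi α β t / (1 - t)) := by
    apply nonneg_of_deriv _ (fun t => ((α:ℝ) + 1) * t ^ β * Dfn α β t / (1 - t) ^ 2)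
    · intro t ht
      have ht0 : t ≠ 0 := ne_of_gt ht.1
      have ht1 : (1:ℝ) - t ≠ 0 := ne_of_gt (by linarith [ht.2] : (0:ℝ) < 1 - t)
      have hq : HasDerivAt (fun t => Psi α β t / (1 - t))
          ((Psid α β t * (1 - t) - Psi α β t * (-1)) / (1 - t) ^ 2) t :=
        (hasDerivAt_Psi α β t).div ((hasDerivAt_id t).const_sub 1) ht1
      have h := (Real.hasDerivAt_rpow_const (x := t) (p := β) (Or.inl ht0)).mul hq
      refine h.congr_deriv ?_
      have htb : t ^ β = t ^ (β - 1) * t := by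
        rw [← Real.rpow_add_one ht0 (β-1)]; ring_nf
      have hL9 := L9 α β hb hb0' t
      set v : ℝ := (1-t)⁻¹ with hv
      have hinv : (1-t) * v = 1 := mul_inv_cancel₀ ht1
      rw [htb]
      simp only [div_eq_mul_inv, ← hv, mul_pow, ← inv_pow]
      linear_combination (t ^ (β-1) * v^2) * hL9 - (β * t^(β-1) * Psi α β t * v) * hinv
    · intro t ht
      have h1 : (0:ℝ) ≤ t ^ β := le_of_lt (Real.rpow_pos_of_pos ht.1 β)
      have h2 : (0:ℝ) ≤ Dfn α β t := D_nonneg α β hb hb0 t ⟨le_of_lt ht.1, ht.2⟩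
      have h3 : (0:ℝ) ≤ ((α:ℝ)+1) := by positivity
      have h4 : (0:ℝ) < (1-t)^2 := by nlinarith [ht.2]
      positivity
    · apply tendsto_rpow_mul_slope β hb _ ((Psid α β 0 * (1 - 0) - Psi α β 0 * (-1)) / (1 - 0) ^ 2)
      · exact (hasDerivAt_Psi α β 0).div ((hasDerivAt_id 0).const_sub 1) (by norm_num)
      · simp [Psi_zero α β hb0']
  intro t ht
  rcases eq_or_lt_of_le ht.1 with h | h
  · rw [← h, Psi_zero α β hb0']
  · have h1 := key t ⟨h, ht.2⟩
    have h2 : (0:ℝ) < t ^ β := Real.rpow_pos_of_pos h β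
    have h3 : (0:ℝ) < 1 - t := by linarith [ht.2]
    by_contra hc
    push_neg at hc
    have : Psi α β t / (1-t) < 0 := div_neg_of_neg_of_pos hc h3
    nlinarith

noncomputable def Fd (α : ℕ) (β t : ℝ) : ℝ :=
  Hd α β t / Hfin α β t + ((α:ℝ) + 2) / (1 - t)

noncomputable def Fdd (α : ℕ) (β t : ℝ) : ℝ :=
  (Hdd α β t * Hfin α β t - Hd α β t * Hd α β t) / (Hfin α β t) ^ 2
    + ((α:ℝ) + 2) / (1 - t) ^ 2

lemma Hd_zero (α : ℕ) (β : ℝ) : Hd α β 0 = -β * ((α:ℝ)+1) / (1+β) := by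
  unfold Hd
  rw [Finset.sum_eq_single 1]
  · rw [Nat.choose_one_right]
    push_cast
    simp
    ring
  · intro n _ hn
    match n, hn with
    | 0, _ => simp
    | (m+2), _ => simp [zero_pow]
  · intro h
    exfalso
    exact h (Finset.mem_range.2 (by omega))

lemma main_bounds (α : ℕ) (β : ℝ) (hb : -1 < β) (hb0 : β < 0)
    (hHpos : ∀ t ∈ Set.Ico (0:ℝ) 1, 0 < Hfin α β t) (t : ℝ) (ht : t ∈ Set.Ico 0 1) :
    ((α:ℝ) + 2) / (1 - t) ^ 2 ≤ Fd α β t + t * Fdd α β t ∧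
      Fd α β t + t * Fdd α β t ≤ (((α:ℝ) + β + 2) / (1 + β)) * (1 / (1 - t) ^ 2) := by
  have hb0' : β ≠ 0 := ne_of_lt hb0
  have hb1 : (0:ℝ) < 1 + β := by linarith
  have ht1 : (0:ℝ) < 1 - t := by linarith [ht.2]
  have ht1' : (1:ℝ) - t ≠ 0 := ne_of_gt ht1
  have hH := hHpos t ht
  have hH' : Hfin α β t ≠ 0 := ne_of_gt hH
  have ha : (0:ℝ) ≤ (α:ℝ) := Nat.cast_nonneg α
  rcases eq_or_lt_of_le ht.1 with h0 | h0
  · -- t = 0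
    subst h0
    have e : Fd α β 0 + 0 * Fdd α β 0 = -β*((α:ℝ)+1)/(1+β) + ((α:ℝ)+2) := by
      unfold Fd
      rw [Hfin_zero α β hb0', Hd_zero α β]
      norm_num
    rw [e]
    have h5 : (0:ℝ) ≤ -β*((α:ℝ)+1)/(1+β) := div_nonneg (by nlinarith) (le_of_lt hb1)
    have h6 : ((α:ℝ)+β+2)/(1+β) = -β*((α:ℝ)+1)/(1+β) + ((α:ℝ)+2) := by
      field_simp
      ring
    constructor
    · have hg : ((α:ℝ) + 2) / (1 - (0:ℝ)) ^ 2 = (α:ℝ)+2 := by norm_num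
      rw [hg]
      linarith
    · have hg : (((α:ℝ) + β + 2) / (1 + β)) * (1 / (1 - (0:ℝ)) ^ 2) = ((α:ℝ)+β+2)/(1+β) := by
        norm_num
      rw [hg, h6]
  · -- 0 < t
    set H := Hfin α β t with hHdef
    set N := Hd α β t * H + t * Hdd α β t * H - t * Hd α β t * Hd α β t with hNdef
    have E1 : Fd α β t + t * Fdd α β t = ((α:ℝ)+2)/(1-t)^2 + N / H^2 := by
      unfold Fd Fdd
      rw [← hHdef, hNdef]
      field_simp
      ring
    have hI1 := I1 α β hb hb0' t
    have hI2 := I2 α β hb hb0' t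
    have E2 : t * N = -β * (1-t)^α * (((α:ℝ)+β+1) * t * H - β * Dfn α β t) := by
      rw [hNdef, Dfn, ← hHdef]
      linear_combination (-(β*H) - (t*Hd α β t + β*((1-t)^(α+1) - H))) * hI1 + (t*H) * hI2
    have hD := D_nonneg α β hb hb0 t ht
    have hPsi := Psi_nonneg α β hb hb0 t ht
    rw [Psi] at hPsi
    rw [Dfn, ← hHdef] at hD hPsi
    have hPa : (0:ℝ) < (1-t)^α := pow_pos ht1 α
    have hN : 0 ≤ N := by
      have h1 : 0 ≤ ((α:ℝ)+β+1) * t * H - β * (H - (1-t)^(α+2)) := by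
        nlinarith [mul_nonneg (le_of_lt h0) (le_of_lt hH)]
      have h2 : 0 ≤ t * N := by
        rw [E2, Dfn, ← hHdef]
        have h2' := mul_nonneg (mul_nonneg (by linarith : (0:ℝ) ≤ -β) (le_of_lt hPa)) h1
        linarith [h2']
      exact (mul_nonneg_iff_of_pos_left h0).1 h2
    have hupN : (1+β) * ((1-t)^2 * N) ≤ -β * ((α:ℝ)+1) * H^2 := by
      have htH : (0:ℝ) ≤ t * H := mul_nonneg (le_of_lt h0) (le_of_lt hH)
      have step1 : (1+β) * (((α:ℝ)+β+1) * t * H - β * (H - (1-t)^(α+2)))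
          ≤ ((α:ℝ)+1) * (t * H) := by nlinarith
      have hpow : (1-t)^(α+2) ≤ H := by linarith
      have hpow0 : (0:ℝ) < (1-t)^(α+2) := pow_pos ht1 _
      have step2 : (1+β) * ((1-t)^2 * (t * N)) ≤ -β * ((α:ℝ)+1) * (t * H) * H := by
        have e3 : (1-t)^2 * (t * N) = (-β) * (1-t)^(α+2) * (((α:ℝ)+β+1) * t * H - β * (H - (1-t)^(α+2))) := by
          rw [E2, Dfn, ← hHdef]
          have : (1-t)^(α+2) = (1-t)^α * (1-t)^2 := by rw [pow_add]
          rw [this]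
          ring
        rw [e3]
        calc (1+β) * ((-β) * (1-t)^(α+2) * (((α:ℝ)+β+1) * t * H - β * (H - (1-t)^(α+2))))
            = (-β) * (1-t)^(α+2) * ((1+β) * (((α:ℝ)+β+1) * t * H - β * (H - (1-t)^(α+2)))) := by ring
          _ ≤ (-β) * (1-t)^(α+2) * (((α:ℝ)+1) * (t * H)) := by
              apply mul_le_mul_of_nonneg_left step1
              exact mul_nonneg (by linarith : (0:ℝ) ≤ -β) (le_of_lt hpow0)
          _ ≤ (-β) * H * (((α:ℝ)+1) * (t * H)) := by
              apply mul_le_mul_of_nonneg_right _ (mul_nonneg (by positivity) htH)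
              apply mul_le_mul_of_nonneg_left hpow (by linarith : (0:ℝ) ≤ -β)
          _ = -β * ((α:ℝ)+1) * (t * H) * H := by ring
      have e5 : (1+β)*((1-t)^2*(t*N)) = t*((1+β)*((1-t)^2*N)) := by ring
      have e6 : -β*((α:ℝ)+1)*(t*H)*H = t*(-β*((α:ℝ)+1)*H^2) := by ring
      rw [e5, e6] at step2
      exact le_of_mul_le_mul_left step2 h0
    constructor
    · rw [E1]
      have : 0 ≤ N / H^2 := div_nonneg hN (by positivity)
      linarith
    · rw [E1]
      have key : N / H^2 ≤ (-β) * ((α:ℝ)+1) / ((1+β) * (1-t)^2) := by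
        rw [div_le_div_iff₀ (by positivity) (by positivity)]
        nlinarith
      have e4 : (((α:ℝ) + β + 2) / (1 + β)) * (1 / (1 - t) ^ 2)
          = ((α:ℝ)+2)/(1-t)^2 + (-β) * ((α:ℝ)+1) / ((1+β) * (1-t)^2) := by
        field_simp
        ring
      rw [e4]
      linarith

lemma hasFDerivAt_normSq (z : ℂ) :
    HasFDerivAt Complex.normSq ((2*z.re) • Complex.reCLM + (2*z.im) • Complex.imCLM) z := by
  have h1 : HasFDerivAt (fun w : ℂ => w.re) Complex.reCLM z := Complex.reCLM.hasFDerivAt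
  have h2 : HasFDerivAt (fun w : ℂ => w.im) Complex.imCLM z := Complex.imCLM.hasFDerivAt
  have h := (h1.mul h1).add (h2.mul h2)
  have hfun : Complex.normSq = fun w : ℂ => w.re * w.re + w.im * w.im := by
    funext w; exact Complex.normSq_apply w
  rw [hfun]
  refine h.congr_fderiv ?_
  ext v
  simp
  ring

section
variable (F : ℝ → ℝ) (F' : ℝ → ℝ)

/-- generic: wderiv of `w ↦ (F (normSq w) : ℂ)` -/
lemma wderiv_radial (w : ℂ) (hF : HasDerivAt F (F' (Complex.normSq w)) (Complex.normSq w)) :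
    wderiv (fun z => ((F (Complex.normSq z) : ℝ) : ℂ)) w
      = ((F' (Complex.normSq w) : ℝ) : ℂ) * (starRingEnd ℂ) w := by
  have hcomp := hF.comp_hasFDerivAt w (hasFDerivAt_normSq w)
  have hk : HasFDerivAt (fun z => ((F (Complex.normSq z) : ℝ) : ℂ))
      (Complex.ofRealCLM.comp ((F' (Complex.normSq w)) • ((2*w.re) • Complex.reCLM + (2*w.im) • Complex.imCLM))) w :=
    Complex.ofRealCLM.hasFDerivAt.comp w hcomp
  rw [wderiv, hk.fderiv]
  simp [Complex.ext_iff]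
  ring_nf
  exact ⟨trivial, trivial⟩
end

section
variable (G : ℝ → ℝ) (G' : ℝ → ℝ)

lemma wderivBar_radial_conj (z : ℂ)
    (hG : HasDerivAt G (G' (Complex.normSq z)) (Complex.normSq z)) :
    wderivBar (fun w => ((G (Complex.normSq w) : ℝ) : ℂ) * (starRingEnd ℂ) w) z
      = ((G (Complex.normSq z) : ℝ) : ℂ)
        + ((G' (Complex.normSq z) : ℝ) : ℂ) * ((Complex.normSq z : ℝ) : ℂ) := by
  have hcomp := hG.comp_hasFDerivAt z (hasFDerivAt_normSq z)
  have hA : HasFDerivAt (fun w => ((G (Complex.normSq w) : ℝ) : ℂ))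
      (Complex.ofRealCLM.comp ((G' (Complex.normSq z)) • ((2*z.re) • Complex.reCLM + (2*z.im) • Complex.imCLM))) z :=
    Complex.ofRealCLM.hasFDerivAt.comp z hcomp
  have hB : HasFDerivAt (fun w : ℂ => (starRingEnd ℂ) w)
      (Complex.conjCLE.toContinuousLinearMap) z := Complex.conjCLE.hasFDerivAt
  have hg := hA.fun_mul hB
  rw [wderivBar, hg.fderiv]
  have hzz : (starRingEnd ℂ) z * z = ((Complex.normSq z : ℝ) : ℂ) := by
    rw [mul_comm]; exact Complex.mul_conj z
  simp [Complex.ext_iff, Complex.normSq_apply]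
  ring_nf
  exact ⟨trivial, trivial⟩
end

lemma hasDerivAt_F (α : ℕ) (β : ℝ) (s : ℝ) (hpos : 0 < Hfin α β s) (hs1 : s < 1) :
    HasDerivAt (fun s => Real.log (Hfin α β s) - ((α : ℝ) + 2) * Real.log (1 - s))
      (Fd α β s) s := by
  have h1 : HasDerivAt (fun s => Real.log (Hfin α β s)) ((Hfin α β s)⁻¹ * Hd α β s) s :=
    (Real.hasDerivAt_log (ne_of_gt hpos)).comp s (hasDerivAt_Hfin α β s)
  have h2 : HasDerivAt (fun s : ℝ => Real.log (1 - s)) ((1-s)⁻¹ * (-1)) s :=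
    (Real.hasDerivAt_log (ne_of_gt (by linarith : (0:ℝ) < 1 - s))).comp s
      ((hasDerivAt_id s).const_sub 1)
  have h := h1.sub (h2.const_mul ((α:ℝ)+2))
  refine h.congr_deriv ?_
  unfold Fd
  field_simp
  ring

lemma hasDerivAt_Fd (α : ℕ) (β : ℝ) (s : ℝ) (hpos : 0 < Hfin α β s) (hs1 : s < 1) :
    HasDerivAt (fun s => Fd α β s) (Fdd α β s) s := by
  have h1 : HasDerivAt (fun s => Hd α β s / Hfin α β s)
      ((Hdd α β s * Hfin α β s - Hd α β s * Hd α β s) / (Hfin α β s)^2) s :=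
    (hasDerivAt_Hd α β s).div (hasDerivAt_Hfin α β s) (ne_of_gt hpos)
  have h2 : HasDerivAt (fun s : ℝ => ((α:ℝ)+2) / (1 - s))
      ((0 * (1-s) - ((α:ℝ)+2) * (-1)) / (1-s)^2) s :=
    (hasDerivAt_const s _).div ((hasDerivAt_id s).const_sub 1)
      (ne_of_gt (by linarith : (0:ℝ) < 1 - s))
  have h := h1.add h2
  refine h.congr_deriv ?_
  unfold Fdd
  ring_nf

theorem bergman_metric_bounds (α : ℕ) (β : ℝ) (hβ : β ∈ Set.Ioc (-1 : ℝ) 0)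
    (hH : ∀ t ∈ Set.Ico (0 : ℝ) 1, 0 < Hfin α β t)
    (z : ℂ) (hz : ‖z‖ < 1) :
    ((α : ℝ) + 2) / (1 - ‖z‖ ^ 2) ^ 2
        ≤ (wderivBar (fun w => wderiv (kappaFn α β) w) z).re ∧
      (wderivBar (fun w => wderiv (kappaFn α β) w) z).re
        ≤ (((α : ℝ) + β + 2) / (1 + β)) * (1 / (1 - ‖z‖ ^ 2) ^ 2) := by
  have hb : -1 < β := hβ.1
  have hb0 : β < 0 := by
    rcases lt_or_eq_of_le hβ.2 with h | h
    · exact h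
    · exfalso
      have h0 := hH 0 ⟨le_refl 0, zero_lt_one⟩
      rw [h, Hfin] at h0
      simp at h0
  have hb0' : β ≠ 0 := ne_of_lt hb0
  set t := Complex.normSq z with htdef
  have htn : ‖z‖ ^ 2 = t := by
    rw [htdef, Complex.sq_norm]
  have ht : t ∈ Set.Ico (0:ℝ) 1 := by
    constructor
    · exact Complex.normSq_nonneg z
    · rw [← htn]
      nlinarith [norm_nonneg z]
  -- the eventual equality of wderiv with the radial formula
  have hev : (fun w => wderiv (kappaFn α β) w) =ᶠ[nhds z]
      (fun w => ((Fd α β (Complex.normSq w) : ℝ) : ℂ) * (starRingEnd ℂ) w) := by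
    have hball : z ∈ Metric.ball (0:ℂ) 1 := by
      simpa [Metric.mem_ball, dist_zero_right] using hz
    filter_upwards [(Metric.isOpen_ball).mem_nhds hball] with w hw
    have hw1 : Complex.normSq w ∈ Set.Ico (0:ℝ) 1 := by
      have hwn : ‖w‖ < 1 := by simpa [Metric.mem_ball, dist_zero_right] using hw
      constructor
      · exact Complex.normSq_nonneg w
      · rw [Complex.normSq_eq_norm_sq]
        nlinarith [norm_nonneg w]
    have hk : kappaFn α β = fun z => (((fun s => Real.log (Hfin α β s)
        - ((α : ℝ) + 2) * Real.log (1 - s)) (Complex.normSq z) : ℝ) : ℂ) := rfl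
    rw [hk]
    exact wderiv_radial _ (Fd α β) w (hasDerivAt_F α β _ (hH _ hw1) hw1.2)
  have hkey : wderivBar (fun w => wderiv (kappaFn α β) w) z
      = ((Fd α β t : ℝ) : ℂ) + ((Fdd α β t : ℝ) : ℂ) * ((t : ℝ) : ℂ) := by
    have e1 : wderivBar (fun w => wderiv (kappaFn α β) w) z
        = wderivBar (fun w => ((Fd α β (Complex.normSq w) : ℝ) : ℂ) * (starRingEnd ℂ) w) z := by
      unfold wderivBar
      rw [hev.fderiv_eq]
    rw [e1]
    exact wderivBar_radial_conj (Fd α β) (Fdd α β) z (hasDerivAt_Fd α β t (hH t ht) ht.2)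
  have hre : (wderivBar (fun w => wderiv (kappaFn α β) w) z).re
      = Fd α β t + t * Fdd α β t := by
    rw [hkey]
    simp
    ring
  rw [hre, htn]
  exact main_bounds α β hb hb0 hH t ht
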